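/- Let G on vertex set V (|V| = n ≥ 2) be the disjoint union of n−1 spanning arborescences A_1,...,A_{n−1} such that at most one vertex of V is the root of two or more of the A_i. Then G contains a rainbow spanning arborescence. -/

import Mathlib

open Finset

variable {V : Type*}

/-- `A` is the arc set of an arborescence on vertex set `U` rooted at `r`:
all arcs lie within `U`, the root has no incoming arc, every other vertex of `U`
has exactly one incoming arc, and every vertex of `U` is reachable from `r`. -/
def IsArborOn [DecidableEq V] (U : Finset V) (A : Finset (V × V)) (r : V) : Prop :=
  r ∈ U ∧ (∀ e ∈ A, e.1 ∈ U ∧ e.2 ∈ U) ∧ (∀ e ∈ A, e.2 ≠ r) ∧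
  (∀ v ∈ U, v ≠ r → (A.filter (fun e => e.2 = v)).card = 1) ∧
  (∀ v ∈ U, Relation.ReflTransGen (fun a b => (a, b) ∈ A) r v)

/-- A spanning arborescence on the whole (finite) vertex type. -/
def IsSpanningArbor [Fintype V] [DecidableEq V] (A : Finset (V × V)) (r : V) : Prop :=
  IsArborOn Finset.univ A r

/-- `B` is rainbow w.r.t. the colored arc sets `A 0, …, A (k-1)`:
each arc of `B` can be assigned a color whose class contains it, with all
assigned colors distinct (i.e. at most one arc from each color). -/
def IsRainbowOf {k : ℕ} (A : Fin k → Finset (V × V)) (B : Finset (V × V)) : Prop :=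
  ∃ c : V × V → Fin k, Set.InjOn c ↑B ∧ ∀ e ∈ B, e ∈ A (c e)

section Aux

variable [DecidableEq V]

private lemma rtg_mono {B B' : Finset (V × V)} (h : B ⊆ B') {a b : V}
    (hab : Relation.ReflTransGen (fun x y => (x, y) ∈ B) a b) :
    Relation.ReflTransGen (fun x y => (x, y) ∈ B') a b :=
  Relation.ReflTransGen.mono (fun x y hxy => h hxy) a b hab

private lemma arbor_card {S : Finset V} {B : Finset (V × V)} {ρ : V}
    (h : IsArborOn S B ρ) : B.card = S.card - 1 := by
  obtain ⟨hρ, hsub, hnr, hdeg, -⟩ := h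
  have hbij : B.card = (S.erase ρ).card := by
    apply Finset.card_bij (fun e _ => e.2)
    · intro e he
      exact Finset.mem_erase.mpr ⟨hnr e he, (hsub e he).2⟩
    · intro e he f hf hef
      have hv : e.2 ∈ S := (hsub e he).2
      obtain ⟨a, ha⟩ := Finset.card_eq_one.mp (hdeg e.2 hv (hnr e he))
      have he' : e ∈ B.filter (fun x => x.2 = e.2) := Finset.mem_filter.mpr ⟨he, rfl⟩
      have hf' : f ∈ B.filter (fun x => x.2 = e.2) := Finset.mem_filter.mpr ⟨hf, hef.symm⟩
      rw [ha, Finset.mem_singleton] at he' hf'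
      rw [he', hf']
    · intro v hv
      rw [Finset.mem_erase] at hv
      obtain ⟨a, ha⟩ := Finset.card_eq_one.mp (hdeg v hv.2 hv.1)
      have haf : a ∈ B.filter (fun x => x.2 = v) := ha ▸ Finset.mem_singleton_self a
      rw [Finset.mem_filter] at haf
      exact ⟨a, haf.1, haf.2⟩
  rw [hbij, Finset.card_erase_of_mem hρ]

private lemma arbor_extend {S : Finset V} {B : Finset (V × V)} {ρ : V} {e : V × V}
    (h : IsArborOn S B ρ) (hx : e.1 ∈ S) (hv : e.2 ∉ S) :
    IsArborOn (insert e.2 S) (insert e B) ρ := by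
  obtain ⟨hρ, hsub, hnr, hdeg, hreach⟩ := h
  refine ⟨Finset.mem_insert_of_mem hρ, ?_, ?_, ?_, ?_⟩
  · intro f hf
    rcases Finset.mem_insert.mp hf with rfl | hf
    · exact ⟨Finset.mem_insert_of_mem hx, Finset.mem_insert_self _ _⟩
    · exact ⟨Finset.mem_insert_of_mem (hsub f hf).1, Finset.mem_insert_of_mem (hsub f hf).2⟩
  · intro f hf
    rcases Finset.mem_insert.mp hf with rfl | hf
    · exact fun hc => hv (hc ▸ hρ)
    · exact hnr f hf
  · intro u hu huρ
    rcases Finset.mem_insert.mp hu with rfl | hu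
    · have hBf : B.filter (fun f => f.2 = e.2) = ∅ := by
        apply Finset.filter_eq_empty_iff.mpr
        intro f hf hc
        exact hv (hc ▸ (hsub f hf).2)
      rw [Finset.filter_insert, if_pos rfl, hBf]
      simp
    · have hne : ¬ (e.2 = u) := fun hc => hv (hc ▸ hu)
      rw [Finset.filter_insert, if_neg hne]
      exact hdeg u hu huρ
  · intro u hu
    rcases Finset.mem_insert.mp hu with rfl | hu
    · exact (rtg_mono (Finset.subset_insert _ _) (hreach e.1 hx)).tail
        (Finset.mem_insert_self e B)
    · exact rtg_mono (Finset.subset_insert _ _) (hreach u hu)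

private lemma arbor_reroot {S : Finset V} {B : Finset (V × V)} {ρ t : V}
    (h : IsArborOn S B ρ) (ht : t ∉ S) :
    IsArborOn (insert t S) (insert (t, ρ) B) t := by
  obtain ⟨hρ, hsub, hnr, hdeg, hreach⟩ := h
  refine ⟨Finset.mem_insert_self _ _, ?_, ?_, ?_, ?_⟩
  · intro f hf
    rcases Finset.mem_insert.mp hf with rfl | hf
    · exact ⟨Finset.mem_insert_self _ _, Finset.mem_insert_of_mem hρ⟩
    · exact ⟨Finset.mem_insert_of_mem (hsub f hf).1, Finset.mem_insert_of_mem (hsub f hf).2⟩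
  · intro f hf
    rcases Finset.mem_insert.mp hf with rfl | hf
    · exact fun hc => ht (hc ▸ hρ)
    · exact fun hc => ht (hc ▸ (hsub f hf).2)
  · intro u hu hut
    rcases Finset.mem_insert.mp hu with rfl | hu
    · exact absurd rfl hut
    · by_cases huρ : u = ρ
      · subst huρ
        have hBf : B.filter (fun f => f.2 = u) = ∅ := by
          apply Finset.filter_eq_empty_iff.mpr
          intro f hf hc
          exact hnr f hf hc
        rw [Finset.filter_insert, if_pos rfl, hBf]
        simp
      · rw [Finset.filter_insert, if_neg (by simpa using Ne.symm huρ)]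
        exact hdeg u hu huρ
  · intro u hu
    rcases Finset.mem_insert.mp hu with rfl | hu
    · exact Relation.ReflTransGen.refl
    · exact Relation.ReflTransGen.trans
        (Relation.ReflTransGen.single (Finset.mem_insert_self _ _))
        (rtg_mono (Finset.subset_insert _ _) (hreach u hu))

private lemma arbor_rotate {S : Finset V} {B : Finset (V × V)} {ρ t : V} {bt : V × V}
    (h : IsArborOn S B ρ) (ht : t ∈ S) (htρ : t ≠ ρ)
    (hbtB : bt ∈ B) (hbt2 : bt.2 = t) (huniq : ∀ e ∈ B, e.2 = t → e = bt) :
    IsArborOn S (insert (t, ρ) (B.erase bt)) t := by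
  obtain ⟨hρ, hsub, hnr, hdeg, hreach⟩ := h
  refine ⟨ht, ?_, ?_, ?_, ?_⟩
  · intro f hf
    rcases Finset.mem_insert.mp hf with rfl | hf
    · exact ⟨ht, hρ⟩
    · exact hsub f (Finset.mem_of_mem_erase hf)
  · intro f hf
    rcases Finset.mem_insert.mp hf with rfl | hf
    · exact Ne.symm htρ
    · intro hc
      have hfB := Finset.mem_of_mem_erase hf
      exact (Finset.mem_erase.mp hf).1 (huniq f hfB hc)
  · intro u hu hut
    by_cases huρ : u = ρ
    · subst huρ
      have hBf : (B.erase bt).filter (fun f => f.2 = u) = ∅ := by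
        apply Finset.filter_eq_empty_iff.mpr
        intro f hf hc
        exact hnr f (Finset.mem_of_mem_erase hf) hc
      rw [Finset.filter_insert, if_pos rfl, hBf]
      simp
    · have hne : ¬ ((t, ρ).2 = u) := by simpa using Ne.symm huρ
      rw [Finset.filter_insert, if_neg hne, Finset.filter_erase,
        Finset.erase_eq_of_notMem (by
          intro hmem
          exact hut ((Finset.mem_filter.mp hmem).2 ▸ hbt2 ▸ rfl))]
      · exact hdeg u hu huρ
  · intro u hu
    have key : ∀ w, Relation.ReflTransGen (fun a b => (a, b) ∈ B) ρ w →
        Relation.ReflTransGen (fun a b => (a, b) ∈ insert (t, ρ) (B.erase bt)) t w := by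
      intro w hw
      induction hw with
      | refl => exact Relation.ReflTransGen.single (Finset.mem_insert_self _ _)
      | @tail b c h1 h2 ih =>
          by_cases hc : c = t
          · exact hc ▸ Relation.ReflTransGen.refl
          · have hne : (b, c) ≠ bt := by
              intro hbc
              exact hc (by rw [← hbt2, ← hbc])
            exact ih.tail (Finset.mem_insert_of_mem (Finset.mem_erase.mpr ⟨hne, h2⟩))
    exact key u (hreach u hu)

private lemma exists_exit [Fintype V] {A : Finset (V × V)} {r : V}
    (hA : IsArborOn Finset.univ A r) {S : Finset V} (hr : r ∈ S) (hS : S ≠ Finset.univ) :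
    ∃ e ∈ A, e.1 ∈ S ∧ e.2 ∉ S := by
  obtain ⟨v, hv⟩ : ∃ v, v ∉ S := by
    by_contra hcon
    push_neg at hcon
    exact hS (Finset.eq_univ_iff_forall.mpr hcon)
  have hre := hA.2.2.2.2 v (Finset.mem_univ v)
  suffices aux : ∀ w, Relation.ReflTransGen (fun a b => (a, b) ∈ A) r w → w ∉ S →
      ∃ e ∈ A, e.1 ∈ S ∧ e.2 ∉ S from aux v hre hv
  intro w hw
  induction hw with
  | refl => exact fun hc => absurd hr hc
  | @tail b c h1 h2 ih =>
      intro hc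
      by_cases hb : b ∈ S
      · exact ⟨(b, c), h2, hb, hc⟩
      · exact ih hb

private lemma exists_in_arc [Fintype V] {A : Finset (V × V)} {r : V}
    (hA : IsArborOn Finset.univ A r) {v : V} (hv : v ≠ r) :
    ∃ t, t ≠ v ∧ (t, v) ∈ A := by
  have hre := hA.2.2.2.2 v (Finset.mem_univ v)
  suffices aux : ∀ w, Relation.ReflTransGen (fun a b => (a, b) ∈ A) r w → w ≠ r →
      ∃ t, t ≠ w ∧ (t, w) ∈ A from aux v hre hv
  intro w hw
  induction hw with
  | refl => exact fun hc => absurd rfl hc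
  | @tail b c h1 h2 ih =>
      intro hc
      by_cases hbc : b = c
      · subst hbc
        exact ih hc
      · exact ⟨b, hbc, h2⟩

end Aux

theorem stmt16 [Fintype V] [DecidableEq V] (hn : 2 ≤ Fintype.card V)
    (A : Fin (Fintype.card V - 1) → Finset (V × V)) (r : Fin (Fintype.card V - 1) → V)
    (hA : ∀ i, IsSpanningArbor (A i) (r i))
    (hmr : (Finset.univ.filter
      (fun v : V => 2 ≤ (Finset.univ.filter (fun i => r i = v)).card)).card ≤ 1) :
    ∃ (B : Finset (V × V)) (r' : V), IsSpanningArbor B r' ∧ IsRainbowOf A B := by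
  classical
  have hNE : Nonempty V := Fintype.card_pos_iff.mp (by omega)
  set M : Finset V :=
    Finset.univ.filter (fun v : V => 2 ≤ (Finset.univ.filter (fun i => r i = v)).card) with hM_def
  set v0 : V := if h : M.Nonempty then h.choose else Classical.arbitrary V with hv0_def
  have hsimple : ∀ w, w ≠ v0 → (Finset.univ.filter (fun i => r i = w)).card ≤ 1 := by
    intro w hw
    by_contra hcon
    push_neg at hcon
    have hwM : w ∈ M := by
      rw [hM_def, Finset.mem_filter]
      exact ⟨Finset.mem_univ w, hcon⟩
    have hne : M.Nonempty := ⟨w, hwM⟩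
    have hv0M : v0 ∈ M := by
      rw [hv0_def, dif_pos hne]
      exact hne.choose_spec
    exact hw (Finset.card_le_one.mp hmr w hwM v0 hv0M)
  -- main induction on the size of the complement
  have MAIN : ∀ (m : ℕ) (S : Finset V) (B : Finset (V × V)) (ρ : V)
      (c : V × V → Fin (Fintype.card V - 1)),
      Sᶜ.card ≤ m → v0 ∈ S → IsArborOn S B ρ → Set.InjOn c ↑B →
      (∀ e ∈ B, e ∈ A (c e)) →
      ∃ (B' : Finset (V × V)) (r' : V), IsSpanningArbor B' r' ∧ IsRainbowOf A B' := by
    intro m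
    induction m with
    | zero =>
        intro S B ρ c hc hv0 harb hinj hmem
        have hS : S = Finset.univ := by
          have h0 : Sᶜ.card = 0 := Nat.le_zero.mp hc
          have := Finset.card_compl S (α := V)
          have hle := Finset.card_le_univ S
          apply Finset.eq_univ_of_card
          omega
        subst hS
        exact ⟨B, ρ, harb, c, hinj, hmem⟩
    | succ m ih =>
        intro S B ρ c hc hv0 harb hinj hmem
        by_cases hS : S = Finset.univ
        · subst hS
          exact ⟨B, ρ, harb, c, hinj, hmem⟩
        · have hcompl : ∀ v, v ∉ S → (insert v S)ᶜ.card ≤ m := by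
            intro v hv
            have h1 : (insert v S)ᶜ = Sᶜ.erase v := by
              ext x
              simp [Finset.mem_compl, Finset.mem_erase, Finset.mem_insert, not_or, and_comm]
            have hvS : v ∈ Sᶜ := Finset.mem_compl.mpr hv
            have hpos : 0 < Sᶜ.card := Finset.card_pos.mpr ⟨v, hvS⟩
            rw [h1, Finset.card_erase_of_mem hvS]
            omega
          by_cases hcase : ∃ i, r i ∈ S ∧ i ∉ B.image c
          · -- a fresh color rooted in S: extend along an exit arc
            obtain ⟨i, hiS, hiun⟩ := hcase
            obtain ⟨e, heA, he1, he2⟩ := exists_exit (hA i) hiS hS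
            have heB : e ∉ B := fun hc' => he2 ((harb.2.1 e hc').2)
            set c' : V × V → Fin (Fintype.card V - 1) := Function.update c e i with hc'_def
            have hc'old : ∀ x ∈ B, c' x = c x := by
              intro x hx
              have hxe : x ≠ e := fun h => heB (h ▸ hx)
              exact Function.update_of_ne hxe i c
            have val_e : c' e = i := Function.update_self e i c
            refine ih (insert e.2 S) (insert e B) ρ c' (hcompl e.2 he2)
              (Finset.mem_insert_of_mem hv0) (arbor_extend harb he1 he2) ?_ ?_
            · intro a ha b hb hab
              rw [Finset.mem_coe, Finset.mem_insert] at ha hb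
              rcases ha with ha | ha <;> rcases hb with hb | hb
              · rw [ha, hb]
              · exfalso
                rw [ha, val_e, hc'old b hb] at hab
                exact hiun (hab ▸ Finset.mem_image_of_mem c hb)
              · exfalso
                rw [hb, val_e, hc'old a ha] at hab
                exact hiun (hab.symm ▸ Finset.mem_image_of_mem c ha)
              · rw [hc'old a ha, hc'old b hb] at hab
                exact hinj (Finset.mem_coe.mpr ha) (Finset.mem_coe.mpr hb) hab
            · intro x hx
              rcases Finset.mem_insert.mp hx with hx | hx
              · rw [hx, val_e]
                exact heA
              · rw [hc'old x hx]
                exact hmem x hx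
          · -- every color rooted in S is already used
            push_neg at hcase
            have hused : ∀ e ∈ B, r (c e) ∈ S := by
              -- counting argument
              set Rin := Finset.univ.filter (fun i => r i ∈ S) with hRin
              set Rout := Finset.univ.filter (fun i => ¬ (r i ∈ S)) with hRout
              have hsubRin : Rin ⊆ B.image c := by
                intro i hi
                exact hcase i (Finset.mem_filter.mp hi).2
              have himg : (B.image c).card = B.card := Finset.card_image_of_injOn hinj
              have hBcard : B.card = S.card - 1 := arbor_card harb
              have hout : Rout.card ≤ Sᶜ.card := by
                apply Finset.card_le_card_of_injOn r
                · intro i hi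
                  exact Finset.mem_compl.mpr (Finset.mem_filter.mp hi).2
                · intro i1 hi1 i2 hi2 heq
                  by_contra hne
                  have hw : r i1 ∉ S := (Finset.mem_filter.mp (Finset.mem_coe.mp hi1)).2
                  have hwv0 : r i1 ≠ v0 := fun hc' => hw (hc' ▸ hv0)
                  have h2card : 1 < (Finset.univ.filter (fun i => r i = r i1)).card := by
                    apply Finset.one_lt_card.mpr
                    exact ⟨i1, Finset.mem_filter.mpr ⟨Finset.mem_univ _, rfl⟩,
                      i2, Finset.mem_filter.mpr ⟨Finset.mem_univ _, heq.symm⟩, hne⟩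
                  have := hsimple (r i1) hwv0
                  omega
              have hsplit : Rin.card + Rout.card = Fintype.card V - 1 := by
                rw [hRin, hRout]
                rw [Finset.card_filter_add_card_filter_not]
                simp
              have hcompl_card := Finset.card_compl S (α := V)
              have hle := Finset.card_le_univ S
              have hS1 : 1 ≤ S.card := Finset.card_pos.mpr ⟨v0, hv0⟩
              have hRinle : Rin.card ≤ (B.image c).card := Finset.card_le_card hsubRin
              have heqcard : (B.image c).card ≤ Rin.card := by omega
              have heq : Rin = B.image c :=
                Finset.eq_of_subset_of_card_le hsubRin heqcard
              intro e he
              have : c e ∈ Rin := heq ▸ Finset.mem_image_of_mem c he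
              exact (Finset.mem_filter.mp this).2
            -- pick an unused color
            have hSlt : S.card < Fintype.card V := by
              have hle := Finset.card_le_univ S
              rcases lt_or_eq_of_le hle with h | h
              · exact h
              · exact absurd (Finset.eq_univ_of_card S h) hS
            obtain ⟨i₁, hi₁⟩ : ∃ i₁, i₁ ∉ B.image c := by
              by_contra hcon
              push_neg at hcon
              have hsub : (Finset.univ : Finset (Fin (Fintype.card V - 1))) ⊆ B.image c :=
                fun i _ => hcon i
              have hcard := Finset.card_le_card hsub
              rw [Finset.card_univ, Fintype.card_fin] at hcard
              have himg : (B.image c).card = B.card := Finset.card_image_of_injOn hinj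
              have hBcard : B.card = S.card - 1 := arbor_card harb
              have hS1 : 1 ≤ S.card := Finset.card_pos.mpr ⟨v0, hv0⟩
              omega
            have hri₁ : r i₁ ∉ S := fun h => hi₁ (hcase i₁ h)
            have hρr : ρ ≠ r i₁ := fun h => hri₁ (h ▸ harb.1)
            obtain ⟨t, htρ, htA⟩ := exists_in_arc (hA i₁) hρr
            have htρB : (t, ρ) ∉ B := fun h => harb.2.2.1 _ h rfl
            by_cases htS : t ∈ S
            · -- rotation: free the used color of the arc into t, then extend
              obtain ⟨bt, hbt_eq⟩ := Finset.card_eq_one.mp (harb.2.2.2.1 t htS htρ)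
              have hbt_mem : bt ∈ B.filter (fun e => e.2 = t) :=
                hbt_eq ▸ Finset.mem_singleton_self bt
              have hbtB : bt ∈ B := (Finset.mem_filter.mp hbt_mem).1
              have hbt2 : bt.2 = t := (Finset.mem_filter.mp hbt_mem).2
              have huniq : ∀ e ∈ B, e.2 = t → e = bt := by
                intro e heB het
                have : e ∈ B.filter (fun e => e.2 = t) := Finset.mem_filter.mpr ⟨heB, het⟩
                rw [hbt_eq, Finset.mem_singleton] at this
                exact this
              have harb₁ : IsArborOn S (insert (t, ρ) (B.erase bt)) t :=
                arbor_rotate harb htS htρ hbtB hbt2 huniq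
              set j := c bt with hj_def
              have hjS : r j ∈ S := hused bt hbtB
              obtain ⟨e', he'A, he'1, he'2⟩ := exists_exit (hA j) hjS hS
              have he'B : e' ∉ B := fun hc' => he'2 ((harb.2.1 e' hc').2)
              have he'tρ : e' ≠ (t, ρ) := fun hc' => he'2 (by rw [hc']; exact harb.1)
              set c₂ : V × V → Fin (Fintype.card V - 1) :=
                Function.update (Function.update c (t, ρ) i₁) e' j with hc₂_def
              have hc₂old : ∀ x ∈ B.erase bt, c₂ x = c x := by
                intro x hx
                have hxB : x ∈ B := Finset.mem_of_mem_erase hx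
                have hx1 : x ≠ e' := fun h => he'B (h ▸ hxB)
                have hx2 : x ≠ (t, ρ) := fun h => htρB (h ▸ hxB)
                rw [hc₂_def, Function.update_of_ne hx1, Function.update_of_ne hx2]
              have hji₁ : j ≠ i₁ := fun hc' => hi₁ (hc' ▸ Finset.mem_image_of_mem c hbtB)
              have hmemB₁ : ∀ x, x ∈ insert (t, ρ) (B.erase bt) →
                  x = (t, ρ) ∨ x ∈ B.erase bt := fun x hx => Finset.mem_insert.mp hx
              refine ih (insert e'.2 S) (insert e' (insert (t, ρ) (B.erase bt))) t c₂
                (hcompl e'.2 he'2) (Finset.mem_insert_of_mem hv0)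
                (arbor_extend harb₁ he'1 he'2) ?_ ?_
              · -- injectivity
                have val_e' : c₂ e' = j := by rw [hc₂_def]; simp
                have val_tρ : c₂ (t, ρ) = i₁ := by
                  rw [hc₂_def, Function.update_of_ne (Ne.symm he'tρ), Function.update_self]
                have hval : ∀ x ∈ B.erase bt, c₂ x ≠ j ∧ c₂ x ≠ i₁ := by
                  intro x hx
                  rw [hc₂old x hx]
                  constructor
                  · intro hcx
                    have hxB : x ∈ B := Finset.mem_of_mem_erase hx
                    have : x = bt := hinj (Finset.mem_coe.mpr hxB) (Finset.mem_coe.mpr hbtB) hcx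
                    exact (Finset.mem_erase.mp hx).1 this
                  · intro hcx
                    exact hi₁ (hcx ▸ Finset.mem_image_of_mem c (Finset.mem_of_mem_erase hx))
                intro a ha b hb hab
                rw [Finset.mem_coe, Finset.mem_insert] at ha hb
                rcases ha with ha | ha <;> rcases hb with hb | hb
                · rw [ha, hb]
                · exfalso
                  rcases hmemB₁ b hb with hb' | hb'
                  · rw [ha, hb', val_e', val_tρ] at hab
                    exact hji₁ hab
                  · rw [ha, val_e'] at hab
                    exact (hval b hb').1 hab.symm
                · exfalso
                  rcases hmemB₁ a ha with ha' | ha'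
                  · rw [hb, ha', val_e', val_tρ] at hab
                    exact hji₁ hab.symm
                  · rw [hb, val_e'] at hab
                    exact (hval a ha').1 hab
                · rcases hmemB₁ a ha with ha' | ha' <;> rcases hmemB₁ b hb with hb' | hb'
                  · rw [ha', hb']
                  · exfalso
                    rw [ha', val_tρ] at hab
                    exact (hval b hb').2 hab.symm
                  · exfalso
                    rw [hb', val_tρ] at hab
                    exact (hval a ha').2 hab
                  · rw [hc₂old a ha', hc₂old b hb'] at hab
                    exact hinj (Finset.mem_coe.mpr (Finset.mem_of_mem_erase ha'))
                      (Finset.mem_coe.mpr (Finset.mem_of_mem_erase hb')) hab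
              · -- membership
                intro x hx
                have val_e' : c₂ e' = j := by rw [hc₂_def]; simp
                have val_tρ : c₂ (t, ρ) = i₁ := by
                  rw [hc₂_def, Function.update_of_ne (Ne.symm he'tρ), Function.update_self]
                rcases Finset.mem_insert.mp hx with hx | hx
                · rw [hx, val_e']
                  exact he'A
                · rcases hmemB₁ x hx with hx' | hx'
                  · rw [hx', val_tρ]
                    exact htA
                  · rw [hc₂old x hx']
                    exact hmem x (Finset.mem_of_mem_erase hx')
            · -- t outside S: re-root and extend
              set c' : V × V → Fin (Fintype.card V - 1) :=
                Function.update c (t, ρ) i₁ with hc'_def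
              have hc'old : ∀ x ∈ B, c' x = c x := by
                intro x hx
                have hxe : x ≠ (t, ρ) := fun h => htρB (h ▸ hx)
                exact Function.update_of_ne hxe i₁ c
              have val_tρ : c' (t, ρ) = i₁ := Function.update_self (t, ρ) i₁ c
              refine ih (insert t S) (insert (t, ρ) B) t c' (hcompl t htS)
                (Finset.mem_insert_of_mem hv0) (arbor_reroot harb htS) ?_ ?_
              · intro a ha b hb hab
                rw [Finset.mem_coe, Finset.mem_insert] at ha hb
                rcases ha with ha | ha <;> rcases hb with hb | hb
                · rw [ha, hb]
                · exfalso
                  rw [ha, val_tρ, hc'old b hb] at hab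
                  exact hi₁ (hab ▸ Finset.mem_image_of_mem c hb)
                · exfalso
                  rw [hb, val_tρ, hc'old a ha] at hab
                  exact hi₁ (hab.symm ▸ Finset.mem_image_of_mem c ha)
                · rw [hc'old a ha, hc'old b hb] at hab
                  exact hinj (Finset.mem_coe.mpr ha) (Finset.mem_coe.mpr hb) hab
              · intro x hx
                rcases Finset.mem_insert.mp hx with hx | hx
                · rw [hx, val_tρ]
                  exact htA
                · rw [hc'old x hx]
                  exact hmem x hx
  -- start from the singleton {v0}
  have hk : 0 < Fintype.card V - 1 := by omega
  refine MAIN (Fintype.card V) {v0} ∅ v0 (fun _ => ⟨0, hk⟩) ?_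
    (Finset.mem_singleton_self v0) ?_ ?_ ?_
  · exact Finset.card_le_univ _
  · refine ⟨Finset.mem_singleton_self v0, ?_, ?_, ?_, ?_⟩
    · intro e he
      simp at he
    · intro e he
      simp at he
    · intro v hv hne
      rw [Finset.mem_singleton] at hv
      exact absurd hv hne
    · intro v hv
      rw [Finset.mem_singleton] at hv
      subst hv
      exact Relation.ReflTransGen.refl
  · simp
  · intro e he
    simp at he
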